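/- arXiv:2108.10609 — 2 statements merged into one kernel-verified Lean document; each statement's English description precedes it below -/
import Mathlib

section
/- Let A, B be positive semidefinite operators on a finite-dimensional Hilbert space and C a bounded operator. If C*AC ≤ λB for some λ > 0, then C B⁻¹ C* ≤ λ A⁻¹, where A⁻¹ and B⁻¹ denote the inverses restricted to the supports of A and B respectively (i.e., Moore–Penrose pseudoinverses). -/
open Matrix
open scoped ComplexOrder

/-- Penrose conditions characterizing the Moore–Penrose pseudoinverse. -/
def IsMoorePenrose {n : ℕ} (A Ap : Matrix (Fin n) (Fin n) ℂ) : Prop :=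
  A * Ap * A = A ∧ Ap * A * Ap = Ap ∧ (A * Ap)ᴴ = A * Ap ∧ (Ap * A)ᴴ = Ap * A

/-- Conjugation of a quadratic form by a matrix. -/
lemma quad_conj {n : ℕ} (M P : Matrix (Fin n) (Fin n) ℂ) (y : Fin n → ℂ) :
    star y ⬝ᵥ (Pᴴ * M * P).mulVec y
      = star (P.mulVec y) ⬝ᵥ M.mulVec (P.mulVec y) := by
  simp [star_mulVec, dotProduct_mulVec, mulVec_mulVec, vecMul_vecMul, Matrix.mul_assoc]

/-- Conjugate of a sesquilinear form. -/
lemma quad_star {n : ℕ} (M : Matrix (Fin n) (Fin n) ℂ) (a b : Fin n → ℂ) :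
    star (star a ⬝ᵥ M.mulVec b) = star b ⬝ᵥ Mᴴ.mulVec a := by
  simp only [dotProduct, mulVec, Finset.sum_congr, star_sum, star_mul',
    conjTranspose_apply, Pi.star_apply, star_star, Finset.mul_sum, Finset.sum_mul]
  rw [Finset.sum_comm]
  congr 1; ext i; congr 1; ext j; ring

/-- Uniqueness of the Moore–Penrose pseudoinverse. -/
lemma mp_unique {n : ℕ} {A X Y : Matrix (Fin n) (Fin n) ℂ}
    (hX : IsMoorePenrose A X) (hY : IsMoorePenrose A Y) : X = Y := by
  obtain ⟨x1, x2, x3, x4⟩ := hX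
  obtain ⟨y1, y2, y3, y4⟩ := hY
  have hAX : A * X = A * Y := by
    calc A * X = (A * X)ᴴ := x3.symm
      _ = Xᴴ * Aᴴ := by rw [conjTranspose_mul]
      _ = Xᴴ * (A * Y * A)ᴴ := by rw [y1]
      _ = (A * X)ᴴ * (A * Y)ᴴ := by
          simp only [conjTranspose_mul]; noncomm_ring
      _ = (A * X) * (A * Y) := by rw [x3, y3]
      _ = (A * X * A) * Y := by noncomm_ring
      _ = A * Y := by rw [x1]
  have hXA : X * A = Y * A := by
    calc X * A = (X * A)ᴴ := x4.symm
      _ = Aᴴ * Xᴴ := by rw [conjTranspose_mul]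
      _ = (A * Y * A)ᴴ * Xᴴ := by rw [y1]
      _ = (Y * A)ᴴ * (X * A)ᴴ := by
          simp only [conjTranspose_mul]; noncomm_ring
      _ = (Y * A) * (X * A) := by rw [y4, x4]
      _ = Y * (A * X * A) := by noncomm_ring
      _ = Y * A := by rw [x1]
  calc X = X * A * X := x2.symm
    _ = X * (A * Y) := by rw [Matrix.mul_assoc, hAX]
    _ = (X * A) * Y := by rw [Matrix.mul_assoc]
    _ = Y * A * Y := by rw [hXA]
    _ = Y := y2

/-- The pseudoinverse of a Hermitian matrix is Hermitian. -/
lemma mp_herm {n : ℕ} {B Binv : Matrix (Fin n) (Fin n) ℂ} (hH : Bᴴ = B)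
    (h : IsMoorePenrose B Binv) : Binvᴴ = Binv := by
  obtain ⟨b1, b2, b3, b4⟩ := h
  have h1 : B * Binvᴴ * B = B := by
    have := congrArg conjTranspose b1
    simp only [conjTranspose_mul, hH, ← Matrix.mul_assoc] at this
    exact this
  have h2 : Binvᴴ * B * Binvᴴ = Binvᴴ := by
    have := congrArg conjTranspose b2
    simp only [conjTranspose_mul, hH, ← Matrix.mul_assoc] at this
    exact this
  have h3 : (B * Binvᴴ)ᴴ = B * Binvᴴ := by
    rw [conjTranspose_mul, conjTranspose_conjTranspose, hH, ← b4,
      conjTranspose_mul, hH]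
  have h4 : (Binvᴴ * B)ᴴ = Binvᴴ * B := by
    rw [conjTranspose_mul, conjTranspose_conjTranspose, hH, ← b3,
      conjTranspose_mul, hH]
  exact mp_unique ⟨h1, h2, h3, h4⟩ ⟨b1, b2, b3, b4⟩

/-- If `C* A C ≤ l • B` for positive semidefinite `A, B` and `l > 0`, then
`C B⁻¹ C* ≤ l • A⁻¹` as an inequality of quadratic forms on the range of `A`,
where the inverses are Moore–Penrose pseudoinverses. -/
theorem stmt0 {n : ℕ} (A B C Ainv Binv : Matrix (Fin n) (Fin n) ℂ)
    (hA : A.PosSemidef) (hB : B.PosSemidef)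
    (hAinv : IsMoorePenrose A Ainv) (hBinv : IsMoorePenrose B Binv)
    (l : ℝ) (hl : 0 < l)
    (h : (l • B - Cᴴ * A * C).PosSemidef) :
    ∀ x : Fin n → ℂ, x ∈ Set.range A.mulVec →
      0 ≤ ((star x) ⬝ᵥ (l • Ainv - C * Binv * Cᴴ).mulVec x).re := by
  intro x hx
  obtain ⟨u, hu⟩ := hx
  have hAH : Aᴴ = A := hA.1
  have hBH : Bᴴ = B := hB.1
  have hBiH : Binvᴴ = Binv := mp_herm hBH hBinv
  set v : Fin n → ℂ := (Binv * Cᴴ).mulVec x with hv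
  set s : ℂ := star x ⬝ᵥ (C * Binv * Cᴴ).mulVec x with hs
  set t : ℂ := star u ⬝ᵥ A.mulVec u with ht
  -- sandwich identity
  have hmat : (Binv * Cᴴ)ᴴ * B * (Binv * Cᴴ) = C * Binv * Cᴴ := by
    rw [conjTranspose_mul, conjTranspose_conjTranspose, hBiH]
    calc C * Binv * B * (Binv * Cᴴ) = C * (Binv * B * Binv) * Cᴴ := by noncomm_ring
      _ = C * Binv * Cᴴ := by rw [hBinv.2.1]
  have hsB : star v ⬝ᵥ B.mulVec v = s := by
    rw [hv, ← quad_conj B (Binv * Cᴴ) x, hmat]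
  -- bound on q_A(Cv)
  have hkey : (star (C.mulVec v) ⬝ᵥ A.mulVec (C.mulVec v)).re ≤ l * s.re := by
    have h0 := (Complex.le_def.mp (h.dotProduct_mulVec_nonneg v)).1
    rw [sub_mulVec, dotProduct_sub, smul_mulVec, dotProduct_smul,
      quad_conj A C v, hsB] at h0
    simp only [Complex.sub_re, Complex.real_smul, Complex.re_ofReal_mul,
      Complex.zero_re] at h0
    linarith
  -- cross term
  have hcross : star u ⬝ᵥ A.mulVec (C.mulVec v) = s := by
    rw [hs, hv, ← hu]
    simp [star_mulVec, hAH, dotProduct_mulVec, vecMul_vecMul, mulVec_mulVec,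
      Matrix.mul_assoc]
  -- Ainv quadratic form
  have hAi : star x ⬝ᵥ Ainv.mulVec x = t := by
    rw [← hu, ← quad_conj Ainv A u]
    rw [show Aᴴ * Ainv * A = A by rw [hAH, hAinv.1]]
  -- expansion of nonnegativity at w := Cv - l•u
  have hE := (Complex.le_def.mp (hA.dotProduct_mulVec_nonneg (C.mulVec v - (l : ℂ) • u))).1
  simp only [mulVec_sub, star_sub, sub_dotProduct, dotProduct_sub, mulVec_smul,
    star_smul, smul_dotProduct, dotProduct_smul] at hE
  rw [hcross] at hE
  have hconj : star (C.mulVec v) ⬝ᵥ A.mulVec u = star s := by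
    rw [← hcross, quad_star, hAH]
  rw [hconj] at hE
  simp only [Complex.sub_re, Complex.add_re, Complex.smul_re, Complex.zero_re,
    Complex.mul_re, star_trivial, RCLike.star_def, Complex.conj_re,
    Complex.conj_im, Complex.ofReal_re, Complex.ofReal_im, Complex.conj_conj] at hE ⊢
  simp only [smul_eq_mul, Complex.real_smul, Complex.conj_ofReal,
    Complex.re_ofReal_mul, Complex.sub_re, Complex.conj_re, ← ht] at hE
  rw [sub_mulVec, dotProduct_sub, smul_mulVec, dotProduct_smul, hAi, ← hs]
  simp only [Complex.sub_re, Complex.real_smul, Complex.re_ofReal_mul]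
  nlinarith [hkey, hE, hl]
end

section
/- Let P(x) = ∑_{α∈I} λ_α σ_α x σ_α be a Pauli channel on 2ⁿ×2ⁿ matrices, where each σ_α is a self-adjoint unitary, the σ_α pairwise commute or anticommute, the λ_α are positive and sum to 1, σ_{0} = identity with 0 ∈ I. Then for each β ∈ I and every x, ‖[σ_β, P(x)]‖ ≤ (1 − 2 min{λ_0, λ_β}) ‖[σ_β, x]‖, and consequently max_{β∈I} ‖[σ_β, P(x)]‖ ≤ (1 − 2 min_{β∈I} λ_β) max_{β∈I} ‖[σ_β, x]‖. -/
set_option maxHeartbeats 1000000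
set_option synthInstance.maxHeartbeats 400000


/-- Lipschitz contraction for Pauli channels: for `P(x) = ∑_α λ_α σ_α x σ_α` with
self-adjoint unitary, pairwise commuting-or-anticommuting `σ_α`, `σ_0 = 1`, and
positive weights summing to one, one has
`‖[σ_β, P x]‖ ≤ (1 - 2 min(λ_0, λ_β)) ‖[σ_β, x]‖` for each `β`, and hence
`max_β ‖[σ_β, P x]‖ ≤ (1 - 2 min_β λ_β) max_β ‖[σ_β, x]‖`. -/
theorem stmt11 {m : ℕ} {ι : Type*} [Fintype ι] (o : ι)
    (σ : ι → (EuclideanSpace ℂ (Fin m) →L[ℂ] EuclideanSpace ℂ (Fin m)))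
    (hσo : σ o = 1)
    (hsa : ∀ α, IsSelfAdjoint (σ α))
    (hunit : ∀ α, σ α * σ α = 1)
    (s : ι → ι → ℝ) (hs : ∀ α β, s α β = 1 ∨ s α β = -1)
    (hcomm : ∀ α β, σ α * σ β = s α β • (σ β * σ α))
    (lam : ι → ℝ) (hlam : ∀ α, 0 < lam α) (hlamsum : ∑ α, lam α = 1)
    (P : (EuclideanSpace ℂ (Fin m) →L[ℂ] EuclideanSpace ℂ (Fin m)) →
         (EuclideanSpace ℂ (Fin m) →L[ℂ] EuclideanSpace ℂ (Fin m)))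
    (hP : ∀ x, P x = ∑ α, lam α • (σ α * x * σ α)) :
    (∀ β x, ‖σ β * P x - P x * σ β‖
        ≤ (1 - 2 * min (lam o) (lam β)) * ‖σ β * x - x * σ β‖) ∧
    (∀ x, (⨆ β, ‖σ β * P x - P x * σ β‖)
        ≤ (1 - 2 * ⨅ β, lam β) * ⨆ β, ‖σ β * x - x * σ β‖) := by
  classical
  haveI hnon : Nonempty ι := ⟨o⟩
  -- the σ's have operator norm at most 1
  have hσn : ∀ α, ‖σ α‖ ≤ 1 := by
    intro α
    have hadj : ContinuousLinearMap.adjoint (σ α) = σ α := hsa α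
    apply ContinuousLinearMap.opNorm_le_bound _ zero_le_one
    intro v
    have haav : σ α (σ α v) = v := by
      have h := congrArg (fun T => T v) (hunit α)
      simpa using h
    have h1 : (inner ℂ (σ α v) (σ α v) : ℂ) = inner ℂ v v := by
      calc (inner ℂ (σ α v) (σ α v) : ℂ)
          = inner ℂ ((ContinuousLinearMap.adjoint (σ α)) (σ α v)) v :=
            (ContinuousLinearMap.adjoint_inner_left (σ α) v (σ α v)).symm
        _ = inner ℂ (σ α (σ α v)) v := by rw [hadj]
        _ = inner ℂ v v := by rw [haav]
    have h2 : ‖σ α v‖ = ‖v‖ := by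
      rw [@norm_eq_sqrt_re_inner ℂ, @norm_eq_sqrt_re_inner ℂ _ _ _ _ v, h1]
    rw [h2, one_mul]
  have hcoe : ∀ (r : ℝ) (y : EuclideanSpace ℂ (Fin m) →L[ℂ] EuclideanSpace ℂ (Fin m)),
      r • y = (r : ℂ) • y := fun r y => (Complex.coe_smul r y).symm
  have part1 : ∀ β x, ‖σ β * P x - P x * σ β‖
      ≤ (1 - 2 * min (lam o) (lam β)) * ‖σ β * x - x * σ β‖ := by
    intro β x
    rcases subsingleton_or_nontrivial
        (EuclideanSpace ℂ (Fin m) →L[ℂ] EuclideanSpace ℂ (Fin m)) with hS | hS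
    · rw [Subsingleton.elim (σ β * P x - P x * σ β) 0,
        Subsingleton.elim (σ β * x - x * σ β) 0]
      simp
    · by_cases hβo : β = o
      · subst hβo
        simp [hσo]
      · -- auxiliary: an element equal to its own negation is zero
        have hneg : ∀ a : EuclideanSpace ℂ (Fin m) →L[ℂ] EuclideanSpace ℂ (Fin m),
            (∀ v, a v + a v = 0) → a = 0 := by
          intro a h'
          have h2 : ∀ v, a v = 0 := by
            intro v
            have h4 : (2 : ℂ) • a v = 0 := by
              rw [two_smul ℂ (a v)]
              exact h' v
            rcases smul_eq_zero.mp h4 with h | h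
            · exact absurd h (by norm_num)
            · exact h
          exact ContinuousLinearMap.ext fun v => by simp [h2 v]
        have hso : s o β = 1 := by
          rcases hs o β with h | h
          · exact h
          · exfalso
            have h2 := hcomm o β
            rw [hσo, one_mul, mul_one, h] at h2
            have h3 : σ β = 0 := by
              apply hneg
              intro v
              have hv := congrArg (fun T => T v) h2
              simp only [ContinuousLinearMap.smul_apply] at hv
              nth_rewrite 2 [hv]
              simp
            have h4 := hunit β
            rw [h3, mul_zero] at h4
            exact one_ne_zero h4.symm
        have hsβ : s β β = 1 := by
          rcases hs β β with h | h
          · exact h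
          · exfalso
            have h2 := hcomm β β
            rw [hunit β, h] at h2
            have h3 : (1 : EuclideanSpace ℂ (Fin m) →L[ℂ] EuclideanSpace ℂ (Fin m)) = 0 := by
              apply hneg
              intro v
              have hv := congrArg (fun T => T v) h2
              simp only [ContinuousLinearMap.smul_apply] at hv
              nth_rewrite 2 [hv]
              simp
            exact one_ne_zero h3
        set D := σ β * x - x * σ β with hD
        set f : ι → (EuclideanSpace ℂ (Fin m) →L[ℂ] EuclideanSpace ℂ (Fin m)) :=
          fun α => ((lam α * s α β : ℝ) : ℂ) • (σ α * D * σ α) with hf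
        have hterm : ∀ α, σ β * (lam α • (σ α * x * σ α))
            - (lam α • (σ α * x * σ α)) * σ β = f α := by
          intro α
          have hss : s α β * s α β = 1 := by
            rcases hs α β with h | h <;> rw [h] <;> norm_num
          have hcab : σ α * σ β = ((s α β : ℝ) : ℂ) • (σ β * σ α) := by
            rw [hcomm α β, hcoe]
          have hc : σ β * σ α = ((s α β : ℝ) : ℂ) • (σ α * σ β) := by
            calc σ β * σ α = ((s α β * s α β : ℝ) : ℂ) • (σ β * σ α) := by
                  rw [hss]; push_cast; rw [one_smul]
              _ = ((s α β : ℝ) : ℂ) • (σ α * σ β) := by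
                  push_cast
                  rw [mul_smul, ← hcab]
          have e1 : σ β * (σ α * x * σ α) = ((s α β : ℝ) : ℂ) • (σ α * (σ β * x) * σ α) := by
            rw [show σ β * (σ α * x * σ α) = (σ β * σ α) * (x * σ α) by noncomm_ring,
              hc, smul_mul_assoc]
            try congr 1
            try noncomm_ring
            try rw [mul_assoc, mul_assoc]
          have e2 : (σ α * x * σ α) * σ β = ((s α β : ℝ) : ℂ) • (σ α * (x * σ β) * σ α) := by
            rw [show (σ α * x * σ α) * σ β = (σ α * x) * (σ α * σ β) by noncomm_ring,
              hcab, mul_smul_comm]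
            try congr 1
            try noncomm_ring
            try rw [mul_assoc, mul_assoc]
          calc σ β * (lam α • (σ α * x * σ α)) - (lam α • (σ α * x * σ α)) * σ β
              = ((lam α : ℝ) : ℂ) • (σ β * (σ α * x * σ α) - (σ α * x * σ α) * σ β) := by
                rw [hcoe, mul_smul_comm, smul_mul_assoc, smul_sub]
            _ = ((lam α : ℝ) : ℂ) • (((s α β : ℝ) : ℂ) • (σ α * (σ β * x) * σ α)
                  - ((s α β : ℝ) : ℂ) • (σ α * (x * σ β) * σ α)) := by rw [e1, e2]
            _ = ((lam α : ℝ) : ℂ) • (((s α β : ℝ) : ℂ) • (σ α * D * σ α)) := by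
                have hsub : σ α * D * σ α
                    = σ α * (σ β * x) * σ α - σ α * (x * σ β) * σ α := by
                  rw [hD, mul_sub, sub_mul]
                rw [hsub]
                simp only [smul_sub]
            _ = f α := by simp only [hf]; push_cast; rw [mul_smul]
        have hsum : σ β * P x - P x * σ β = ∑ α, f α := by
          rw [hP, Finset.mul_sum, Finset.sum_mul, ← Finset.sum_sub_distrib]
          exact Finset.sum_congr rfl fun α _ => hterm α
        have hβmem : β ∈ (Finset.univ : Finset ι).erase o :=
          Finset.mem_erase.mpr ⟨hβo, Finset.mem_univ β⟩
        set u := ((Finset.univ : Finset ι).erase o).erase β with hu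
        have hsplit : ∑ α, f α = f o + (f β + ∑ α ∈ u, f α) := by
          rw [Finset.add_sum_erase _ f hβmem, Finset.add_sum_erase _ f (Finset.mem_univ o)]
        have hfo : f o = ((lam o : ℝ) : ℂ) • D := by
          simp only [hf]
          rw [hσo, hso, mul_one, one_mul, mul_one]
        have hDββ : σ β * D * σ β = -D := by
          calc σ β * D * σ β
              = σ β * (σ β * x) * σ β - σ β * (x * σ β) * σ β := by
                rw [hD, mul_sub, sub_mul]
            _ = x * σ β - σ β * x := by
                rw [← mul_assoc (σ β) (σ β) x, hunit β, one_mul]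
                rw [mul_assoc (σ β) (x * σ β) (σ β), mul_assoc x (σ β) (σ β), hunit β, mul_one]
            _ = -D := by rw [hD, neg_sub]
        have hfβ : f β = -(((lam β : ℝ) : ℂ) • D) := by
          simp only [hf]
          rw [hsβ, mul_one, hDββ]
          module
        have hlamu : ∑ α ∈ u, lam α = 1 - lam o - lam β := by
          have h1 : lam β + ∑ α ∈ u, lam α = ∑ α ∈ (Finset.univ : Finset ι).erase o, lam α :=
            Finset.add_sum_erase _ lam hβmem
          have h2 : lam o + ∑ α ∈ (Finset.univ : Finset ι).erase o, lam α = 1 := by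
            rw [Finset.add_sum_erase _ lam (Finset.mem_univ o), hlamsum]
          linarith
        have hfn : ∀ α, ‖f α‖ ≤ lam α * ‖D‖ := by
          intro α
          have habs : ‖((lam α * s α β : ℝ) : ℂ)‖ = lam α := by
            rw [Complex.norm_real, Real.norm_eq_abs, abs_mul, abs_of_pos (hlam α)]
            rcases hs α β with h | h <;> rw [h] <;> norm_num
          have hDn : ‖σ α * D * σ α‖ ≤ ‖D‖ := by
            calc ‖σ α * D * σ α‖ ≤ ‖σ α * D‖ * ‖σ α‖ := norm_mul_le _ _
              _ ≤ ‖σ α‖ * ‖D‖ * ‖σ α‖ := by gcongr; exact norm_mul_le _ _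
              _ ≤ 1 * ‖D‖ * 1 := by gcongr <;> exact hσn α
              _ = ‖D‖ := by ring
          calc ‖f α‖ = ‖((lam α * s α β : ℝ) : ℂ)‖ * ‖σ α * D * σ α‖ := by
                simp only [hf]
                exact norm_smul ((lam α * s α β : ℝ) : ℂ) (σ α * D * σ α)
            _ ≤ lam α * ‖D‖ := by rw [habs]; exact mul_le_mul_of_nonneg_left hDn (hlam α).le
        have harith : |lam o - lam β| + (1 - lam o - lam β)
            = 1 - 2 * min (lam o) (lam β) := by
          rcases le_total (lam o) (lam β) with h | h
          · rw [min_eq_left h, abs_of_nonpos (by linarith)]; ring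
          · rw [min_eq_right h, abs_of_nonneg (by linarith)]; ring
        have hcombine : f o + f β = ((lam o - lam β : ℝ) : ℂ) • D := by
          rw [hfo, hfβ]
          push_cast
          module
        calc ‖σ β * P x - P x * σ β‖
            = ‖((lam o - lam β : ℝ) : ℂ) • D + ∑ α ∈ u, f α‖ := by
              rw [hsum, hsplit, ← add_assoc, hcombine]
          _ ≤ ‖((lam o - lam β : ℝ) : ℂ) • D‖ + ‖∑ α ∈ u, f α‖ := norm_add_le _ _
          _ ≤ |lam o - lam β| * ‖D‖ + ∑ α ∈ u, ‖f α‖ := by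
              have hns : ‖((lam o - lam β : ℝ) : ℂ) • D‖ = |lam o - lam β| * ‖D‖ := by
                have h := norm_smul ((lam o - lam β : ℝ) : ℂ) D
                rw [Complex.norm_real, Real.norm_eq_abs] at h
                exact h
              rw [← hns]
              exact add_le_add_right (norm_sum_le _ _) _
          _ ≤ |lam o - lam β| * ‖D‖ + ∑ α ∈ u, lam α * ‖D‖ := by
              gcongr with α hα
              exact hfn α
          _ = (|lam o - lam β| + (1 - lam o - lam β)) * ‖D‖ := by
              rw [← Finset.sum_mul, hlamu]; ring
          _ = (1 - 2 * min (lam o) (lam β)) * ‖D‖ := by rw [harith]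
  refine ⟨part1, ?_⟩
  intro x
  have hbddA : BddAbove (Set.range fun β => ‖σ β * x - x * σ β‖) :=
    Set.Finite.bddAbove (Set.finite_range _)
  rcases subsingleton_or_nontrivial ι with hι | hι
  · have hb : ∀ β : ι, σ β = 1 := fun β => by rw [Subsingleton.elim β o, hσo]
    simp [hb]
  · obtain ⟨a, b, hab⟩ := exists_pair_ne ι
    have hinf_le : ∀ γ, (⨅ β, lam β) ≤ lam γ := fun γ =>
      ciInf_le (Set.Finite.bddBelow (Set.finite_range _)) γ
    have hab1 : lam a + lam b ≤ 1 := by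
      have h1 : lam a + ∑ α ∈ (Finset.univ : Finset ι).erase a, lam α = 1 := by
        rw [Finset.add_sum_erase _ lam (Finset.mem_univ a), hlamsum]
      have h2 : lam b ≤ ∑ α ∈ (Finset.univ : Finset ι).erase a, lam α :=
        Finset.single_le_sum (fun i _ => (hlam i).le)
          (Finset.mem_erase.mpr ⟨hab.symm, Finset.mem_univ b⟩)
      linarith
    have hc2 : (0 : ℝ) ≤ 1 - 2 * ⨅ β, lam β := by
      have := hinf_le a; have := hinf_le b; linarith
    apply ciSup_le
    intro β
    calc ‖σ β * P x - P x * σ β‖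
        ≤ (1 - 2 * min (lam o) (lam β)) * ‖σ β * x - x * σ β‖ := part1 β x
      _ ≤ (1 - 2 * ⨅ β, lam β) * ⨆ β, ‖σ β * x - x * σ β‖ := by
          apply mul_le_mul
          · have h1 := hinf_le o
            have h2 := hinf_le β
            have h3 : (⨅ β, lam β) ≤ min (lam o) (lam β) := le_min h1 h2
            linarith
          · exact le_ciSup hbddA β
          · exact norm_nonneg _
          · exact hc2
end
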